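/- Let Ω ⊂ ℝ^(2n+1−k) be open and φ : Ω → ℝ^k continuously differentiable in the Euclidean sense. Then for every m ∈ Ω, φ is intrinsic differentiable at m and its intrinsic Jacobian is given entrywise by [J^φφ(m)]_{i,j} = (W_j^φ φ_i)(m) for i = 1,…,k and j = 1,…,2n−k, where W_j^φ φ_i denotes the vector field W_j^φ applied to the i-th component of φ. -/

import Mathlib

open scoped BigOperators
open MeasureTheory Filter Topology

noncomputable section

namespace HeisGraph

/-! ### Points of the Heisenberg group ℍⁿ, identified with ℝ^{2n+1} -/

/-- Index type for the coordinates of a point of ℍⁿ: `x`-coordinates, `y`-coordinates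
and the vertical coordinate `t`. -/
abbrev HIdxT (n : ℕ) := Sum (Fin n) (Sum (Fin n) Unit)

/-- ℍⁿ as a Euclidean space (so that the Euclidean norm is available). -/
abbrev HP (n : ℕ) := EuclideanSpace ℝ (HIdxT n)

variable {n k : ℕ}

def xPart (p : HP n) (i : Fin n) : ℝ := p (Sum.inl i)
def yPart (p : HP n) (i : Fin n) : ℝ := p (Sum.inr (Sum.inl i))
def tPart (p : HP n) : ℝ := p (Sum.inr (Sum.inr ()))

def mkH (x y : Fin n → ℝ) (t : ℝ) : HP n :=
  WithLp.toLp 2 fun i => Sum.elim x (Sum.elim y (fun _ => t)) i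

/-- The Heisenberg group product on ℝ^{2n+1}. -/
def hMul (p q : HP n) : HP n :=
  mkH (fun i => xPart p i + xPart q i) (fun i => yPart p i + yPart q i)
    (tPart p + tPart q + (1 / 2) * ∑ i : Fin n, (xPart p i * yPart q i - xPart q i * yPart p i))

/-- The Heisenberg group inverse: `p⁻¹ = -p`. -/
def hInv (p : HP n) : HP n := -p

/-- The intrinsic dilations of ℍⁿ. -/
def dilH (lam : ℝ) (p : HP n) : HP n :=
  mkH (fun i => lam * xPart p i) (fun i => lam * yPart p i) (lam ^ 2 * tPart p)

/-- The homogeneous norm `‖p‖_∞ = max { |(x,y)| , |t|^{1/2} }`. -/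
def normH (p : HP n) : ℝ :=
  max (Real.sqrt (∑ i, xPart p i ^ 2 + ∑ i, yPart p i ^ 2)) (Real.sqrt |tPart p|)

/-- The homogeneous distance `d_∞(p,q) = ‖q⁻¹ · p‖_∞`. -/
def dInf (p q : HP n) : ℝ := normH (hMul (hInv q) p)

/-! ### Points of 𝕄 ≅ ℝ^{2n+1-k}: coordinates (v_{k+1..n}, η_{1..k}, w_{k+1..n}, τ) -/

abbrev MIdxT (n k : ℕ) := Sum (Fin (n - k)) (Sum (Fin k) (Sum (Fin (n - k)) Unit))

abbrev MP (n k : ℕ) := EuclideanSpace ℝ (MIdxT n k)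

def vPart (a : MP n k) (j : Fin (n - k)) : ℝ := a (Sum.inl j)
def etaPart (a : MP n k) (i : Fin k) : ℝ := a (Sum.inr (Sum.inl i))
def wPart (a : MP n k) (j : Fin (n - k)) : ℝ := a (Sum.inr (Sum.inr (Sum.inl j)))
def tauPart (a : MP n k) : ℝ := a (Sum.inr (Sum.inr (Sum.inr ())))

def mkM (v : Fin (n - k) → ℝ) (η : Fin k → ℝ) (w : Fin (n - k) → ℝ) (τ : ℝ) : MP n k :=
  WithLp.toLp 2 fun i => Sum.elim v (Sum.elim η (Sum.elim w (fun _ => τ))) i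

/-- The embedding `i : ℝ^{2n+1-k} → ℍⁿ` onto the subgroup 𝕄 (`k` zeros among the
`x`-coordinates first). -/
def iota (a : MP n k) : HP n :=
  mkH (fun i => if h : (i : ℕ) < k then 0 else vPart a ⟨(i : ℕ) - k, by have := i.isLt; omega⟩)
    (fun i => if h : (i : ℕ) < k then etaPart a ⟨(i : ℕ), h⟩
      else wPart a ⟨(i : ℕ) - k, by have := i.isLt; omega⟩)
    (tauPart a)

/-- The embedding `j : ℝ^k → ℍⁿ` onto the horizontal subgroup ℍ. -/
def jmap (h : EuclideanSpace ℝ (Fin k)) : HP n :=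
  mkH (fun i => if hi : (i : ℕ) < k then h ⟨(i : ℕ), hi⟩ else 0) (fun _ => 0) 0

/-- The projection `π_𝕄 : ℍⁿ → 𝕄` determined by the unique factorization `p = m·h`,
`m ∈ 𝕄`, `h ∈ ℍ` (written in the coordinates of `MP n k`). -/
def piM (hk : k ≤ n) (p : HP n) : MP n k :=
  mkM (fun j => xPart p ⟨(j : ℕ) + k, by have := j.isLt; omega⟩)
    (fun i => yPart p ⟨(i : ℕ), lt_of_lt_of_le i.isLt hk⟩)
    (fun j => yPart p ⟨(j : ℕ) + k, by have := j.isLt; omega⟩)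
    (tPart p + (1 / 2) * ∑ i : Fin k,
      xPart p ⟨(i : ℕ), lt_of_lt_of_le i.isLt hk⟩ * yPart p ⟨(i : ℕ), lt_of_lt_of_le i.isLt hk⟩)

/-- The unit vertical vector of `MP n k`. -/
def tauUnit : MP n k := mkM 0 0 0 1

/-- The product `⋆` induced on ℝ^{2n+1-k} by the group structure of 𝕄. -/
def starMul (a b : MP n k) : MP n k :=
  a + b + ((1 / 2) * ∑ j : Fin (n - k), (vPart a j * wPart b j - vPart b j * wPart a j)) • tauUnit

/-- The dilations `δ_λ^⋆` induced on ℝ^{2n+1-k}. -/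
def dilStar (lam : ℝ) (a : MP n k) : MP n k :=
  mkM (fun j => lam * vPart a j) (fun i => lam * etaPart a i) (fun j => lam * wPart a j)
    (lam ^ 2 * tauPart a)

/-- The homogeneous norm of 𝕄 read on `MP n k` (it equals `normH (iota a)`). -/
def normM (a : MP n k) : ℝ :=
  max (Real.sqrt (∑ j, vPart a j ^ 2 + ∑ i, etaPart a i ^ 2 + ∑ j, wPart a j ^ 2))
    (Real.sqrt |tauPart a|)

/-- The graph map `Φ(a) = i(a) · j(φ(a))`. -/
def graphMap (φ : MP n k → EuclideanSpace ℝ (Fin k)) (a : MP n k) : HP n :=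
  hMul (iota a) (jmap (φ a))

/-- The graph distance `d_φ(a,b) = ‖π_𝕄(Φ(b)⁻¹ · Φ(a))‖_∞`. -/
def dPhi (hk : k ≤ n) (φ : MP n k → EuclideanSpace ℝ (Fin k)) (a b : MP n k) : ℝ :=
  normM (piM hk (hMul (hInv (graphMap φ b)) (graphMap φ a)))

/-- `L : ℝ^{2n+1-k} → ℝ^k` is ⋆-linear: a homomorphism for `⋆`, homogeneous of degree 1
for the dilations `δ_λ^⋆`. -/
def IsStarLinear (L : MP n k → EuclideanSpace ℝ (Fin k)) : Prop :=
  (∀ a b, L (starMul a b) = L a + L b) ∧ ∀ lam > (0 : ℝ), ∀ a, L (dilStar lam a) = lam • L a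

/-! ### Horizontal coordinates, matrices, cubes -/

/-- Index type for the `2n-k` horizontal coordinates of `MP n k` (τ deleted). -/
abbrev HorIdx (n k : ℕ) := Sum (Fin (n - k)) (Sum (Fin k) (Fin (n - k)))

/-- The projection `π` deleting the vertical coordinate τ. -/
def piHor (a : MP n k) : HorIdx n k → ℝ :=
  Sum.elim (fun j => vPart a j) (Sum.elim (fun i => etaPart a i) (fun j => wPart a j))

/-- The ⋆-linear map associated to a `k × (2n-k)` matrix: `L(a) = M · π(a)`. -/
def ofMatrix (M : Matrix (Fin k) (HorIdx n k) ℝ) (a : MP n k) : EuclideanSpace ℝ (Fin k) :=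
  WithLp.toLp 2 fun i => M.mulVec (piHor a) i

/-- The open coordinate cube `I_r(a)`. -/
def cube (r : ℝ) (a : MP n k) : Set (MP n k) := {p | ∀ i, |p i - a i| < r}

/-- The closed coordinate cube `cl(I_r(a))`. -/
def closedCube (r : ℝ) (a : MP n k) : Set (MP n k) := {p | ∀ i, |p i - a i| ≤ r}

/-! ### Intrinsic differentiability -/

/-- The quantitative condition expressing uniform intrinsic differentiability of `φ`
at `a₀` (relative to `Ω`) with intrinsic differential `L`:
`lim_{r→0} sup_{a,b ∈ I_r(a₀)∩Ω} |φ(b) - φ(a) - L(a⁻¹ ⋆ b)| / d_φ(b,a) = 0`. -/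
def UIDcond (hk : k ≤ n) (Ω : Set (MP n k)) (φ : MP n k → EuclideanSpace ℝ (Fin k))
    (a₀ : MP n k) (L : MP n k → EuclideanSpace ℝ (Fin k)) : Prop :=
  ∀ ε > (0 : ℝ), ∃ r > (0 : ℝ), ∀ a ∈ cube r a₀ ∩ Ω, ∀ b ∈ cube r a₀ ∩ Ω,
    ‖φ b - φ a - L (starMul (-a) b)‖ ≤ ε * dPhi hk φ b a

/-- `φ` is uniformly intrinsic differentiable at `a₀`. -/
def UIDAt (hk : k ≤ n) (Ω : Set (MP n k)) (φ : MP n k → EuclideanSpace ℝ (Fin k))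
    (a₀ : MP n k) : Prop :=
  ∃ L, IsStarLinear L ∧ UIDcond hk Ω φ a₀ L

/-- `φ` is uniformly intrinsic differentiable at `a₀` with intrinsic Jacobian matrix `M`. -/
def UIDAtWith (hk : k ≤ n) (Ω : Set (MP n k)) (φ : MP n k → EuclideanSpace ℝ (Fin k))
    (a₀ : MP n k) (M : Matrix (Fin k) (HorIdx n k) ℝ) : Prop :=
  UIDcond hk Ω φ a₀ (ofMatrix M)

/-- The condition expressing intrinsic differentiability of `φ` at `a₀` with intrinsic
differential `L`: `lim_{a→a₀} |φ(a) - φ(a₀) - L(a₀⁻¹ ⋆ a)| / d_φ(a,a₀) = 0`. -/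
def IDcond (hk : k ≤ n) (Ω : Set (MP n k)) (φ : MP n k → EuclideanSpace ℝ (Fin k))
    (a₀ : MP n k) (L : MP n k → EuclideanSpace ℝ (Fin k)) : Prop :=
  ∀ ε > (0 : ℝ), ∃ δ > (0 : ℝ), ∀ a ∈ Ω, ‖a - a₀‖ < δ →
    ‖φ a - φ a₀ - L (starMul (-a₀) a)‖ ≤ ε * dPhi hk φ a a₀

/-- `φ` is intrinsic differentiable at `a₀`. -/
def IDAt (hk : k ≤ n) (Ω : Set (MP n k)) (φ : MP n k → EuclideanSpace ℝ (Fin k))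
    (a₀ : MP n k) : Prop :=
  ∃ L, IsStarLinear L ∧ IDcond hk Ω φ a₀ L

/-- `φ` is intrinsic differentiable at `a₀` with intrinsic Jacobian matrix `M`. -/
def IDAtWith (hk : k ≤ n) (Ω : Set (MP n k)) (φ : MP n k → EuclideanSpace ℝ (Fin k))
    (a₀ : MP n k) (M : Matrix (Fin k) (HorIdx n k) ℝ) : Prop :=
  IDcond hk Ω φ a₀ (ofMatrix M)

/-! ### The vector fields `W_j^φ` -/

/-- The `2n-k` vector fields `W^φ` on `MP n k`:
`W_j^φ = ∂_{v_j} - (1/2) w_j ∂_τ`, `∇^{φ_i} = ∂_{η_i} + φ_i ∂_τ`,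
`W^φ = ∂_{w_j} + (1/2) v_j ∂_τ`. -/
def Wfield (φ : MP n k → EuclideanSpace ℝ (Fin k)) (ℓ : HorIdx n k) (p : MP n k) : MP n k :=
  match ℓ with
  | Sum.inl j => mkM (Pi.single j 1) 0 0 (-(1 / 2) * wPart p j)
  | Sum.inr (Sum.inl i) => mkM 0 (Pi.single i 1) 0 (φ p i)
  | Sum.inr (Sum.inr j) => mkM 0 0 (Pi.single j 1) ((1 / 2) * vPart p j)

/-- For `ψ` of class C¹ (Euclidean sense), the intrinsic Jacobian matrix
`J^ψψ(m) = [(W_ℓ^ψ ψ_i)(m)]_{i,ℓ}`. -/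
def JC1 (ψ : MP n k → EuclideanSpace ℝ (Fin k)) (m : MP n k) :
    Matrix (Fin k) (HorIdx n k) ℝ :=
  Matrix.of fun i ℓ => fderiv ℝ ψ m (Wfield ψ ℓ m) i

/-- `φ` has `∂^{φ_ℓ}`-derivative `D` at `a`: along every integral curve of `W_ℓ^φ`
through `a` the difference quotients of `φ` converge to `D`. -/
def HasWDerivAt (Ω : Set (MP n k)) (φ : MP n k → EuclideanSpace ℝ (Fin k)) (ℓ : HorIdx n k)
    (a : MP n k) (D : EuclideanSpace ℝ (Fin k)) : Prop :=
  ∀ δ > (0 : ℝ), ∀ γ : ℝ → MP n k, γ 0 = a →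
    (∀ s ∈ Set.Ioo (-δ) δ, γ s ∈ Ω) →
    (∀ s ∈ Set.Ioo (-δ) δ, HasDerivAt γ (Wfield φ ℓ (γ s)) s) →
    Tendsto (fun s : ℝ => s⁻¹ • (φ (γ s) - φ a)) (𝓝[≠] (0 : ℝ)) (𝓝 D)

/-- The little-½-Hölder condition on `Ω`. -/
def LittleHolder (Ω : Set (MP n k)) (φ : MP n k → EuclideanSpace ℝ (Fin k)) : Prop :=
  ∀ Ω' : Set (MP n k), IsOpen Ω' → IsCompact (closure Ω') → closure Ω' ⊆ Ω →
    ∀ ε > (0 : ℝ), ∃ r > (0 : ℝ), ∀ a ∈ Ω', ∀ b ∈ Ω', a ≠ b → ‖a - b‖ ≤ r →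
      ‖φ a - φ b‖ ≤ ε * Real.sqrt ‖a - b‖

/-! ### `C¹_ℍ` functions on ℍⁿ -/

/-- The horizontal vector fields `X_i`, `Y_i` of ℍⁿ. -/
def Zfield (i : Sum (Fin n) (Fin n)) (p : HP n) : HP n :=
  match i with
  | Sum.inl i => mkH (Pi.single i 1) 0 (-(1 / 2) * yPart p i)
  | Sum.inr i => mkH 0 (Pi.single i 1) ((1 / 2) * xPart p i)

/-- `f : U → ℝ^k` is of class `C¹_ℍ` with horizontal derivatives `Df`: `f` is continuous
on `U`, the `Df p i` are continuous on `U` and represent the distributional derivatives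
of `f` along the horizontal vector fields. -/
def C1H (U : Set (HP n)) (f : HP n → EuclideanSpace ℝ (Fin k))
    (Df : HP n → Sum (Fin n) (Fin n) → EuclideanSpace ℝ (Fin k)) : Prop :=
  ContinuousOn f U ∧ (∀ i, ContinuousOn (fun p => Df p i) U) ∧
    ∀ (i : Sum (Fin n) (Fin n)) (j : Fin k) (ψ : HP n → ℝ),
      ContDiff ℝ (⊤ : ℕ∞) ψ → HasCompactSupport ψ → tsupport ψ ⊆ U →
      (∫ p in U, f p j * fderiv ℝ ψ p (Zfield i p)) = -∫ p in U, Df p i j * ψ p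

/-! ### The quasi-distance ρ_φ -/

/-- The function `ρ_φ(a,b)`. -/
def rhoPhi (φ : MP n k → EuclideanSpace ℝ (Fin k)) (a b : MP n k) : ℝ :=
  max
    (Real.sqrt (∑ j, (vPart a j - vPart b j) ^ 2 + ∑ i, (etaPart a i - etaPart b i) ^ 2 +
      ∑ j, (wPart a j - wPart b j) ^ 2))
    (Real.sqrt |tauPart a - tauPart b +
      (1 / 2) * ∑ i, (φ a i + φ b i) * (etaPart b i - etaPart a i) +
      (1 / 2) * ∑ j, (vPart a j * wPart b j - vPart b j * wPart a j)|)

/-! ### Families of exponential maps -/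

/-- A family of exponential maps for `φ` near `a`, as in Definition 4.2 of the paper. -/
structure ExpFamily (Ω : Set (MP n k)) (φ : MP n k → EuclideanSpace ℝ (Fin k))
    (a : MP n k) where
  δ₁ : ℝ
  δ₂ : ℝ
  pos : 0 < δ₂
  lt : δ₂ < δ₁
  sub : closedCube δ₁ a ⊆ Ω
  E : HorIdx n k → ℝ → MP n k → MP n k
  ω : HorIdx n k → MP n k → EuclideanSpace ℝ (Fin k)
  maps : ∀ ℓ, ∀ s ∈ Set.Icc (-δ₂) δ₂, ∀ b ∈ closedCube δ₂ a, E ℓ s b ∈ closedCube δ₁ a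
  start : ∀ ℓ, ∀ b ∈ closedCube δ₂ a, E ℓ 0 b = b
  isIntegral : ∀ ℓ, ∀ b ∈ closedCube δ₂ a, ∀ s ∈ Set.Icc (-δ₂) δ₂,
    HasDerivAt (fun r => E ℓ r b) (Wfield φ ℓ (E ℓ s b)) s
  contOmega : ∀ ℓ (i : Fin k), ContinuousOn (fun b => ω ℓ b i) Ω
  chain : ∀ ℓ, ∀ b ∈ closedCube δ₂ a, ∀ s ∈ Set.Icc (-δ₂) δ₂, ∀ i : Fin k,
    φ (E ℓ s b) i - φ b i = ∫ r in (0 : ℝ)..s, ω ℓ (E ℓ r b) i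

/-! ### Auxiliary lemmas -/
section Aux
variable {n k : ℕ}

@[simp] lemma xPart_mkH (x y : Fin n → ℝ) (t : ℝ) (i : Fin n) : xPart (mkH x y t) i = x i := rfl
@[simp] lemma yPart_mkH (x y : Fin n → ℝ) (t : ℝ) (i : Fin n) : yPart (mkH x y t) i = y i := rfl
@[simp] lemma tPart_mkH (x y : Fin n → ℝ) (t : ℝ) : tPart (mkH x y t) = t := rfl
@[simp] lemma vPart_mkM (v : Fin (n-k) → ℝ) (η : Fin k → ℝ) (w : Fin (n-k) → ℝ) (τ : ℝ) (j) :
    vPart (mkM v η w τ) j = v j := rfl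
@[simp] lemma etaPart_mkM (v : Fin (n-k) → ℝ) (η : Fin k → ℝ) (w : Fin (n-k) → ℝ) (τ : ℝ) (i) :
    etaPart (mkM v η w τ) i = η i := rfl
@[simp] lemma wPart_mkM (v : Fin (n-k) → ℝ) (η : Fin k → ℝ) (w : Fin (n-k) → ℝ) (τ : ℝ) (j) :
    wPart (mkM v η w τ) j = w j := rfl
@[simp] lemma tauPart_mkM (v : Fin (n-k) → ℝ) (η : Fin k → ℝ) (w : Fin (n-k) → ℝ) (τ : ℝ) :
    tauPart (mkM v η w τ) = τ := rfl

@[simp] lemma xPart_hMul (p q : HP n) (i : Fin n) : xPart (hMul p q) i = xPart p i + xPart q i := rfl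
@[simp] lemma yPart_hMul (p q : HP n) (i : Fin n) : yPart (hMul p q) i = yPart p i + yPart q i := rfl
lemma tPart_hMul (p q : HP n) : tPart (hMul p q) =
    tPart p + tPart q + (1 / 2) * ∑ i : Fin n, (xPart p i * yPart q i - xPart q i * yPart p i) := rfl

@[simp] lemma xPart_neg (p : HP n) (i : Fin n) : xPart (-p) i = -xPart p i := rfl
@[simp] lemma yPart_neg (p : HP n) (i : Fin n) : yPart (-p) i = -yPart p i := rfl
@[simp] lemma tPart_neg (p : HP n) : tPart (-p) = -tPart p := rfl

lemma sum_split (hk : k ≤ n) (f : Fin n → ℝ) :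
    ∑ i : Fin n, f i =
      (∑ i : Fin k, f ⟨i, lt_of_lt_of_le i.isLt hk⟩) +
        ∑ j : Fin (n - k), f ⟨(j : ℕ) + k, by have := j.isLt; omega⟩ := by
  have hkn : k + (n - k) = n := by omega
  rw [← Equiv.sum_comp (finSumFinEquiv.trans (finCongr hkn)) f, Fintype.sum_sum_type]
  congr 1 <;>
    refine Finset.sum_congr rfl fun i _ => congr_arg f (Fin.ext ?_) <;>
      simp <;> omega

end Aux
section Aux2
variable {n k : ℕ}

lemma xPart_graph_lt (φ : MP n k → EuclideanSpace ℝ (Fin k)) (a : MP n k) (i : Fin n)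
    (hi : (i : ℕ) < k) : xPart (graphMap φ a) i = φ a ⟨i, hi⟩ := by
  simp [graphMap, iota, jmap, hi]

lemma xPart_graph_ge (φ : MP n k → EuclideanSpace ℝ (Fin k)) (a : MP n k) (i : Fin n)
    (hi : ¬ (i : ℕ) < k) :
    xPart (graphMap φ a) i = vPart a ⟨(i : ℕ) - k, by have := i.isLt; omega⟩ := by
  simp [graphMap, iota, jmap, hi]

lemma yPart_graph_lt (φ : MP n k → EuclideanSpace ℝ (Fin k)) (a : MP n k) (i : Fin n)
    (hi : (i : ℕ) < k) : yPart (graphMap φ a) i = etaPart a ⟨i, hi⟩ := by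
  simp [graphMap, iota, jmap, hi]

lemma yPart_graph_ge (φ : MP n k → EuclideanSpace ℝ (Fin k)) (a : MP n k) (i : Fin n)
    (hi : ¬ (i : ℕ) < k) :
    yPart (graphMap φ a) i = wPart a ⟨(i : ℕ) - k, by have := i.isLt; omega⟩ := by
  simp [graphMap, iota, jmap, hi]

lemma tPart_graph (hk : k ≤ n) (φ : MP n k → EuclideanSpace ℝ (Fin k)) (a : MP n k) :
    tPart (graphMap φ a) = tauPart a - (1 / 2) * ∑ i : Fin k, φ a i * etaPart a i := by
  rw [graphMap, tPart_hMul]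
  rw [sum_split hk (f := fun i => xPart (iota a) i * yPart (jmap (φ a)) i
    - xPart (jmap (φ a)) i * yPart (iota a) i)]
  simp [iota, jmap]
  ring

end Aux2
section Aux3
variable {n k : ℕ}

/-- The τ-part of `π_𝕄(Φ(b)⁻¹·Φ(a))`. -/
def Tq (φ : MP n k → EuclideanSpace ℝ (Fin k)) (a b : MP n k) : ℝ :=
  tauPart a - tauPart b - (∑ i : Fin k, φ b i * (etaPart a i - etaPart b i))
    + (1 / 2) * ∑ j : Fin (n - k), (vPart a j * wPart b j - vPart b j * wPart a j)

lemma xPart_graph_lt' (φ : MP n k → EuclideanSpace ℝ (Fin k)) (c : MP n k) (i : Fin k)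
    (pf : (i : ℕ) < n) : xPart (graphMap φ c) ⟨i, pf⟩ = φ c i := by
  rw [xPart_graph_lt φ c _ i.isLt]

lemma yPart_graph_lt' (φ : MP n k → EuclideanSpace ℝ (Fin k)) (c : MP n k) (i : Fin k)
    (pf : (i : ℕ) < n) : yPart (graphMap φ c) ⟨i, pf⟩ = etaPart c i := by
  rw [yPart_graph_lt φ c _ i.isLt]

lemma xPart_graph_ge' (φ : MP n k → EuclideanSpace ℝ (Fin k)) (c : MP n k) (j : Fin (n - k))
    (pf : (j : ℕ) + k < n) : xPart (graphMap φ c) ⟨(j : ℕ) + k, pf⟩ = vPart c j := by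
  rw [xPart_graph_ge φ c _ (by show ¬ (j : ℕ) + k < k; omega)]
  exact congrArg (vPart c) (Fin.ext (by show (j : ℕ) + k - k = (j:ℕ); omega))

lemma yPart_graph_ge' (φ : MP n k → EuclideanSpace ℝ (Fin k)) (c : MP n k) (j : Fin (n - k))
    (pf : (j : ℕ) + k < n) : yPart (graphMap φ c) ⟨(j : ℕ) + k, pf⟩ = wPart c j := by
  rw [yPart_graph_ge φ c _ (by show ¬ (j : ℕ) + k < k; omega)]
  exact congrArg (wPart c) (Fin.ext (by show (j : ℕ) + k - k = (j:ℕ); omega))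

lemma vPart_prod (hk : k ≤ n) (φ : MP n k → EuclideanSpace ℝ (Fin k)) (a b : MP n k)
    (j : Fin (n - k)) :
    vPart (piM hk (hMul (hInv (graphMap φ b)) (graphMap φ a))) j = vPart a j - vPart b j := by
  simp only [piM, vPart_mkM, xPart_hMul, hInv, xPart_neg, xPart_graph_ge']
  ring

lemma etaPart_prod (hk : k ≤ n) (φ : MP n k → EuclideanSpace ℝ (Fin k)) (a b : MP n k)
    (i : Fin k) :
    etaPart (piM hk (hMul (hInv (graphMap φ b)) (graphMap φ a))) i
      = etaPart a i - etaPart b i := by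
  simp only [piM, etaPart_mkM, yPart_hMul, hInv, yPart_neg, yPart_graph_lt']
  ring

lemma wPart_prod (hk : k ≤ n) (φ : MP n k → EuclideanSpace ℝ (Fin k)) (a b : MP n k)
    (j : Fin (n - k)) :
    wPart (piM hk (hMul (hInv (graphMap φ b)) (graphMap φ a))) j = wPart a j - wPart b j := by
  simp only [piM, wPart_mkM, yPart_hMul, hInv, yPart_neg, yPart_graph_ge']
  ring

lemma tauPart_prod (hk : k ≤ n) (φ : MP n k → EuclideanSpace ℝ (Fin k)) (a b : MP n k) :
    tauPart (piM hk (hMul (hInv (graphMap φ b)) (graphMap φ a))) = Tq φ a b := by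
  simp only [piM, tauPart_mkM, tPart_hMul]
  rw [sum_split hk (f := fun i => xPart (hInv (graphMap φ b)) i * yPart (graphMap φ a) i
    - xPart (graphMap φ a) i * yPart (hInv (graphMap φ b)) i)]
  simp only [hInv, xPart_neg, yPart_neg, tPart_neg, xPart_hMul, yPart_hMul,
    xPart_graph_lt', yPart_graph_lt', xPart_graph_ge', yPart_graph_ge',
    tPart_graph hk φ]
  simp only [Tq, neg_mul, mul_neg, neg_neg, mul_sub, sub_mul, add_mul, mul_add,
    Finset.sum_add_distrib, Finset.sum_sub_distrib, Finset.sum_neg_distrib]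
  ring

end Aux3
section Aux4
variable {n k : ℕ}

lemma dPhi_eq (hk : k ≤ n) (φ : MP n k → EuclideanSpace ℝ (Fin k)) (a b : MP n k) :
    dPhi hk φ a b =
      max (Real.sqrt (∑ j, (vPart a j - vPart b j) ^ 2 + ∑ i, (etaPart a i - etaPart b i) ^ 2
          + ∑ j, (wPart a j - wPart b j) ^ 2))
        (Real.sqrt |Tq φ a b|) := by
  rw [dPhi, normM, tauPart_prod hk]
  simp only [vPart_prod hk, etaPart_prod hk, wPart_prod hk]

lemma normMP (x : MP n k) :
    ‖x‖ = Real.sqrt (∑ j, vPart x j ^ 2 + ∑ i, etaPart x i ^ 2 + ∑ j, wPart x j ^ 2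
      + tauPart x ^ 2) := by
  rw [EuclideanSpace.norm_eq]
  congr 1
  simp [Fintype.sum_sum_type, sq_abs, vPart, etaPart, wPart, tauPart]
  ring

@[simp] lemma vPart_sub (a b : MP n k) (j : Fin (n-k)) :
    vPart (a - b) j = vPart a j - vPart b j := rfl
@[simp] lemma etaPart_sub (a b : MP n k) (i : Fin k) :
    etaPart (a - b) i = etaPart a i - etaPart b i := rfl
@[simp] lemma wPart_sub (a b : MP n k) (j : Fin (n-k)) :
    wPart (a - b) j = wPart a j - wPart b j := rfl
@[simp] lemma tauPart_sub (a b : MP n k) :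
    tauPart (a - b) = tauPart a - tauPart b := rfl

lemma piHor_starMul_neg (m a : MP n k) (ℓ : HorIdx n k) :
    piHor (starMul (-m) a) ℓ = piHor a ℓ - piHor m ℓ := by
  rcases ℓ with j | i | j <;>
    simp [piHor, starMul, tauUnit, vPart, etaPart, wPart, mkM] <;> ring

lemma sum_W (φ : MP n k → EuclideanSpace ℝ (Fin k)) (m a : MP n k) :
    ∑ ℓ : HorIdx n k, (piHor a ℓ - piHor m ℓ) • Wfield φ ℓ m
      = (a - m) - (Tq φ a m) • tauUnit := by
  ext idx
  rw [WithLp.ofLp_sum, Finset.sum_apply]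
  simp only [Fintype.sum_sum_type]
  rcases idx with j' | i' | j' | u
  · simp [Wfield, piHor, vPart, etaPart, wPart, tauPart, mkM, tauUnit, Pi.single_apply,
      mul_ite, Finset.sum_ite_eq]
  · simp [Wfield, piHor, vPart, etaPart, wPart, tauPart, mkM, tauUnit, Pi.single_apply,
      mul_ite, Finset.sum_ite_eq]
  · simp [Wfield, piHor, vPart, etaPart, wPart, tauPart, mkM, tauUnit, Pi.single_apply,
      mul_ite, Finset.sum_ite_eq]
  · simp only [Wfield, piHor, vPart, etaPart, wPart, tauPart, mkM, tauUnit, Tq,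
      PiLp.smul_apply, PiLp.sub_apply, smul_eq_mul, Sum.elim_inr, Sum.elim_inl]
    simp [Finset.mul_sum, Finset.sum_sub_distrib, mul_sub, sub_mul]
    simp only [mul_comm, mul_left_comm, mul_assoc]
    ring

lemma ofMatrix_JC1_apply (φ : MP n k → EuclideanSpace ℝ (Fin k)) (m a : MP n k) (i : Fin k) :
    ofMatrix (JC1 φ m) (starMul (-m) a) i
      = fderiv ℝ φ m (a - m) i - Tq φ a m * fderiv ℝ φ m tauUnit i := by
  have h1 : ofMatrix (JC1 φ m) (starMul (-m) a) i
      = ∑ ℓ : HorIdx n k, (piHor a ℓ - piHor m ℓ) * fderiv ℝ φ m (Wfield φ ℓ m) i := by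
    rw [ofMatrix, WithLp.ofLp_toLp, Matrix.mulVec, dotProduct]
    exact Finset.sum_congr rfl fun ℓ _ => by rw [piHor_starMul_neg]; simp only [JC1, Matrix.of_apply]; ring
  rw [h1]
  have h2 : ∀ ℓ : HorIdx n k, (piHor a ℓ - piHor m ℓ) * fderiv ℝ φ m (Wfield φ ℓ m) i
      = (fderiv ℝ φ m ((piHor a ℓ - piHor m ℓ) • Wfield φ ℓ m)) i := by
    intro ℓ; rw [(fderiv ℝ φ m).map_smul]; rfl
  rw [Finset.sum_congr rfl fun ℓ _ => h2 ℓ]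
  rw [← Finset.sum_apply i Finset.univ (fun ℓ => (fderiv ℝ φ m ((piHor a ℓ - piHor m ℓ) • Wfield φ ℓ m)).ofLp), ← WithLp.ofLp_sum]
  rw [← map_sum (fderiv ℝ φ m) (fun ℓ => (piHor a ℓ - piHor m ℓ) • Wfield φ ℓ m) Finset.univ,
    sum_W, map_sub, (fderiv ℝ φ m).map_smul]
  rfl

end Aux4
set_option maxHeartbeats 1000000 in
/-- Proposition 3.9: if `φ` is continuously differentiable in the
Euclidean sense on the open set `Ω`, then `φ` is intrinsic differentiable at every
`m ∈ Ω`, with intrinsic Jacobian `[J^φφ(m)]_{i,ℓ} = (W_ℓ^φ φ_i)(m)`. -/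
theorem statement5 (n k : ℕ) (hn : 1 ≤ n) (hk1 : 1 ≤ k) (hk : k ≤ n)
    (Ω : Set (MP n k)) (hΩ : IsOpen Ω)
    (φ : MP n k → EuclideanSpace ℝ (Fin k)) (hφ : ContDiffOn ℝ 1 φ Ω) :
    ∀ m ∈ Ω, IDAtWith hk Ω φ m (JC1 φ m) := by
  intro m hm
  have hdiff : DifferentiableAt ℝ φ m :=
    (hφ.contDiffAt (hΩ.mem_nhds hm)).differentiableAt one_ne_zero
  have hD : HasFDerivAt φ (fderiv ℝ φ m) m := hdiff.hasFDerivAt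
  set D := fderiv ℝ φ m with hDdef
  set P1 : ℝ := ∑ i, |φ m i| with hP1def
  set P2 : ℝ := ∑ j, |wPart m j| with hP2def
  set P3 : ℝ := ∑ j, |vPart m j| with hP3def
  have hP1 : 0 ≤ P1 := Finset.sum_nonneg fun _ _ => abs_nonneg _
  have hP2 : 0 ≤ P2 := Finset.sum_nonneg fun _ _ => abs_nonneg _
  have hP3 : 0 ≤ P3 := Finset.sum_nonneg fun _ _ => abs_nonneg _
  set C0 : ℝ := P1 + (1/2) * P2 + (1/2) * P3 with hC0def
  have hC0 : 0 ≤ C0 := by rw [hC0def]; linarith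
  set K : ℝ := ‖D tauUnit‖ with hKdef
  have hK : 0 ≤ K := norm_nonneg _
  intro ε hε
  set ε₁ : ℝ := ε / (2 * (2 + C0)) with hε₁def
  have hε₁ : 0 < ε₁ := div_pos hε (by linarith)
  obtain ⟨δ₀, hδ₀pos, hδ₀⟩ : ∃ δ₀ > 0, ∀ a, ‖a - m‖ < δ₀ →
      ‖φ a - φ m - D (a - m)‖ ≤ ε₁ * ‖a - m‖ := by
    obtain ⟨δ, hδ, hh⟩ := Metric.eventually_nhds_iff.mp (hD.isLittleO.def hε₁)
    exact ⟨δ, hδ, fun a ha => hh (by rwa [dist_eq_norm])⟩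
  set c : ℝ := min 1 (ε / (2 * (K + 1))) with hcdef
  have hcpos : 0 < c := lt_min one_pos (div_pos hε (by linarith))
  refine ⟨min δ₀ (min c (c^2 / (1 + C0))),
    lt_min hδ₀pos (lt_min hcpos (div_pos (pow_pos hcpos 2) (by linarith))), ?_⟩
  intro a haΩ har
  -- abbreviations
  set Δτ : ℝ := tauPart a - tauPart m with hΔτ
  set S : ℝ := ∑ j, (vPart a j - vPart m j) ^ 2 + ∑ i, (etaPart a i - etaPart m i) ^ 2
      + ∑ j, (wPart a j - wPart m j) ^ 2 with hSdef
  set A : ℝ := Real.sqrt S with hAdef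
  set Sig1 : ℝ := ∑ i, φ m i * (etaPart a i - etaPart m i) with hSig1def
  set Sig2 : ℝ := ∑ j, (vPart a j * wPart m j - vPart m j * wPart a j) with hSig2def
  set T : ℝ := Tq φ a m with hTdef
  set d : ℝ := dPhi hk φ a m with hddef
  set r : ℝ := ‖a - m‖ with hrdef
  have hsq1 : 0 ≤ ∑ j, (vPart a j - vPart m j) ^ 2 :=
    Finset.sum_nonneg fun _ _ => sq_nonneg _
  have hsq2 : 0 ≤ ∑ i, (etaPart a i - etaPart m i) ^ 2 :=
    Finset.sum_nonneg fun _ _ => sq_nonneg _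
  have hsq3 : 0 ≤ ∑ j, (wPart a j - wPart m j) ^ 2 :=
    Finset.sum_nonneg fun _ _ => sq_nonneg _
  have hSnn : 0 ≤ S := by rw [hSdef]; linarith
  have hA2 : A ^ 2 = S := Real.sq_sqrt hSnn
  have hAnn : 0 ≤ A := Real.sqrt_nonneg _
  have hd : d = max A (Real.sqrt |T|) := dPhi_eq hk φ a m
  have hdnn : 0 ≤ d := by rw [hd]; exact le_trans hAnn (le_max_left _ _)
  have hAd : A ≤ d := by rw [hd]; exact le_max_left _ _
  have hTd : |T| ≤ d ^ 2 := by
    have h1 : Real.sqrt |T| ≤ d := by rw [hd]; exact le_max_right _ _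
    calc |T| = Real.sqrt |T| ^ 2 := (Real.sq_sqrt (abs_nonneg _)).symm
      _ ≤ d ^ 2 := pow_le_pow_left₀ (Real.sqrt_nonneg _) h1 2
  have hr_eq : r = Real.sqrt (S + Δτ ^ 2) := by
    rw [hrdef, normMP (a - m)]
    simp only [vPart_sub, etaPart_sub, wPart_sub, tauPart_sub, ← hSdef, ← hΔτ]
  have hAr : A ≤ r := by
    rw [hr_eq, hAdef]
    exact Real.sqrt_le_sqrt (by linarith [sq_nonneg Δτ])
  have hτr : |Δτ| ≤ r := by
    rw [hr_eq, ← Real.sqrt_sq_eq_abs Δτ]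
    exact Real.sqrt_le_sqrt (by linarith)
  -- coordinate bounds
  have hcv : ∀ j, |vPart a j - vPart m j| ≤ A := by
    intro j
    rw [hAdef, ← Real.sqrt_sq_eq_abs, hSdef]
    refine Real.sqrt_le_sqrt ?_
    have h1 : (vPart a j - vPart m j) ^ 2 ≤ ∑ j', (vPart a j' - vPart m j') ^ 2 := by
      simpa using Finset.single_le_sum (f := fun j' => (vPart a j' - vPart m j') ^ 2)
        (fun _ _ => sq_nonneg _) (Finset.mem_univ j)
    linarith
  have hcη : ∀ i, |etaPart a i - etaPart m i| ≤ A := by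
    intro i
    rw [hAdef, ← Real.sqrt_sq_eq_abs, hSdef]
    refine Real.sqrt_le_sqrt ?_
    have h1 : (etaPart a i - etaPart m i) ^ 2 ≤ ∑ i', (etaPart a i' - etaPart m i') ^ 2 := by
      simpa using Finset.single_le_sum (f := fun i' => (etaPart a i' - etaPart m i') ^ 2)
        (fun _ _ => sq_nonneg _) (Finset.mem_univ i)
    linarith
  have hcw : ∀ j, |wPart a j - wPart m j| ≤ A := by
    intro j
    rw [hAdef, ← Real.sqrt_sq_eq_abs, hSdef]
    refine Real.sqrt_le_sqrt ?_
    have h1 : (wPart a j - wPart m j) ^ 2 ≤ ∑ j', (wPart a j' - wPart m j') ^ 2 := by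
      simpa using Finset.single_le_sum (f := fun j' => (wPart a j' - wPart m j') ^ 2)
        (fun _ _ => sq_nonneg _) (Finset.mem_univ j)
    linarith
  -- bounds on the sums entering T
  have hb1 : |Sig1| ≤ P1 * A := by
    rw [hSig1def, hP1def]
    calc |∑ i, φ m i * (etaPart a i - etaPart m i)|
        ≤ ∑ i, |φ m i * (etaPart a i - etaPart m i)| := Finset.abs_sum_le_sum_abs _ _
      _ ≤ ∑ i, |φ m i| * A := by
          refine Finset.sum_le_sum fun i _ => ?_
          rw [abs_mul]
          exact mul_le_mul_of_nonneg_left (hcη i) (abs_nonneg _)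
      _ = (∑ i, |φ m i|) * A := by rw [Finset.sum_mul]
  have hb2 : |Sig2| ≤ P2 * A + P3 * A := by
    rw [hSig2def, hP2def, hP3def]
    calc |∑ j, (vPart a j * wPart m j - vPart m j * wPart a j)|
        ≤ ∑ j, |vPart a j * wPart m j - vPart m j * wPart a j| := Finset.abs_sum_le_sum_abs _ _
      _ ≤ ∑ j, (|wPart m j| * A + |vPart m j| * A) := by
          refine Finset.sum_le_sum fun j _ => ?_
          have he : vPart a j * wPart m j - vPart m j * wPart a j
              = (vPart a j - vPart m j) * wPart m j
                - vPart m j * (wPart a j - wPart m j) := by ring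
          rw [he]
          have h0 := abs_sub ((vPart a j - vPart m j) * wPart m j)
            (vPart m j * (wPart a j - wPart m j))
          rw [abs_mul, abs_mul] at h0
          have h1 := mul_le_mul_of_nonneg_left (hcv j) (abs_nonneg (wPart m j))
          have h2 := mul_le_mul_of_nonneg_left (hcw j) (abs_nonneg (vPart m j))
          have h3 : |vPart a j - vPart m j| * |wPart m j|
              = |wPart m j| * |vPart a j - vPart m j| := mul_comm _ _
          linarith [h0, h1, h2]
      _ = (∑ j, |wPart m j|) * A + (∑ j, |vPart m j|) * A := by
          rw [Finset.sum_add_distrib, Finset.sum_mul, Finset.sum_mul]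
  have hTform : T = Δτ - Sig1 + (1/2) * Sig2 := by
    rw [hTdef, hΔτ, hSig1def, hSig2def, Tq]
  have habs3 : ∀ x y z : ℝ, |x + y + z| ≤ |x| + |y| + |z| := by
    intro x y z
    calc |x + y + z| ≤ |x + y| + |z| := abs_add_le _ _
      _ ≤ |x| + |y| + |z| := by linarith [abs_add_le x y]
  have hTτ : |T| ≤ |Δτ| + C0 * A := by
    have h0 : |T| = |Δτ + (-Sig1) + (1/2) * Sig2| := by rw [hTform]; ring_nf
    rw [h0]
    have h1 := habs3 Δτ (-Sig1) ((1/2) * Sig2)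
    rw [abs_neg, abs_mul, abs_of_pos (by norm_num : (0:ℝ) < 1/2)] at h1
    have : C0 * A = P1 * A + (1/2) * (P2 * A + P3 * A) := by rw [hC0def]; ring
    linarith [hb1, hb2]
  have hτT : |Δτ| ≤ |T| + C0 * A := by
    have h0 : |Δτ| = |T + Sig1 + (-(1/2)) * Sig2| := by
      congr 1; rw [hTform]; ring
    rw [h0]
    have h1 := habs3 T Sig1 ((-(1/2)) * Sig2)
    rw [abs_mul, abs_neg, abs_of_pos (by norm_num : (0:ℝ) < 1/2)] at h1
    have : C0 * A = P1 * A + (1/2) * (P2 * A + P3 * A) := by rw [hC0def]; ring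
    linarith [hb1, hb2]
  have hr_le : r ≤ A + |Δτ| := by
    rw [hr_eq]
    have h1 : S + Δτ ^ 2 ≤ (A + |Δτ|) ^ 2 := by
      have e : (A + |Δτ|) ^ 2 = S + 2 * (A * |Δτ|) + Δτ ^ 2 := by
        rw [← hA2, ← sq_abs Δτ]; ring
      linarith [mul_nonneg hAnn (abs_nonneg Δτ)]
    calc Real.sqrt (S + Δτ ^ 2) ≤ Real.sqrt ((A + |Δτ|) ^ 2) := Real.sqrt_le_sqrt h1
      _ = A + |Δτ| := Real.sqrt_sq (by positivity)
  -- smallness of r and d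
  have hrδ₀ : r < δ₀ := lt_of_lt_of_le har (min_le_left _ _)
  have hrc : r ≤ c := le_of_lt (lt_of_lt_of_le har ((min_le_right _ _).trans (min_le_left _ _)))
  have hrnn : 0 ≤ r := norm_nonneg _
  have hrc2 : (1 + C0) * r ≤ c ^ 2 := by
    have h1 : r < c^2 / (1 + C0) :=
      lt_of_lt_of_le har ((min_le_right _ _).trans (min_le_right _ _))
    rw [lt_div_iff₀ (by linarith : (0:ℝ) < 1 + C0)] at h1
    linarith
  have hC0Ar : C0 * A ≤ C0 * r := mul_le_mul_of_nonneg_left hAr hC0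
  have hdc : d ≤ c := by
    rw [hd]
    refine max_le (hAr.trans hrc) ?_
    have h1 : |T| ≤ c ^ 2 := by linarith [hTτ, hτr, hC0Ar, hrc2]
    calc Real.sqrt |T| ≤ Real.sqrt (c^2) := Real.sqrt_le_sqrt h1
      _ = c := Real.sqrt_sq hcpos.le
  have hd1 : d ≤ 1 := hdc.trans (min_le_left _ _)
  have hd2 : d ≤ ε / (2 * (K + 1)) := hdc.trans (min_le_right _ _)
  -- the remainder identity
  have hrem : φ a - φ m - ofMatrix (JC1 φ m) (starMul (-m) a)
      = (φ a - φ m - D (a - m)) + T • (D tauUnit) := by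
    ext i
    simp only [PiLp.add_apply, PiLp.sub_apply, PiLp.smul_apply, smul_eq_mul,
      ofMatrix_JC1_apply, ← hDdef, ← hTdef]
    ring
  -- final estimate
  have hC0Ad : C0 * A ≤ C0 * d := mul_le_mul_of_nonneg_left hAd hC0
  have hrd : r ≤ (1 + C0) * d + d ^ 2 := by linarith [hr_le, hτT, hTd, hAd, hC0Ad]
  calc ‖φ a - φ m - ofMatrix (JC1 φ m) (starMul (-m) a)‖
      = ‖(φ a - φ m - D (a - m)) + T • (D tauUnit)‖ := by rw [hrem]
    _ ≤ ‖φ a - φ m - D (a - m)‖ + ‖T • (D tauUnit)‖ := norm_add_le _ _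
    _ ≤ ε₁ * r + |T| * K := by
        have h1 := hδ₀ a hrδ₀
        rw [norm_smul, Real.norm_eq_abs]
        exact add_le_add h1 le_rfl
    _ ≤ ε * d := by
        have h1 : ε₁ * r ≤ ε₁ * ((1 + C0) * d + d ^ 2) :=
          mul_le_mul_of_nonneg_left hrd hε₁.le
        have h2 : |T| * K ≤ d ^ 2 * K := mul_le_mul_of_nonneg_right hTd hK
        have hd2' : d ^ 2 ≤ d := by
          have := mul_le_mul_of_nonneg_right hd1 hdnn
          calc d ^ 2 = d * d := sq d
            _ ≤ 1 * d := this
            _ = d := one_mul d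
        have key1 : ε₁ * (2 + C0) = ε / 2 := by
          rw [hε₁def]; field_simp
        have key2 : ε / (2 * (K + 1)) * K ≤ ε / 2 := by
          rw [div_mul_eq_mul_div, div_le_div_iff₀ (by positivity) (by norm_num : (0:ℝ) < 2)]
          have h := mul_nonneg hε.le hK
          ring_nf
          linarith [h]
        have h3 : d ^ 2 * K ≤ d * (ε / (2 * (K + 1))) * K := by
          have hh : d ^ 2 ≤ d * (ε / (2 * (K + 1))) := by
            have h := mul_le_mul_of_nonneg_left hd2 hdnn
            calc d ^ 2 = d * d := sq d
              _ ≤ d * (ε / (2 * (K + 1))) := h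
          exact mul_le_mul_of_nonneg_right hh hK
        have h4 : d * (ε / (2 * (K + 1))) * K ≤ d * (ε / 2) := by
          rw [mul_assoc]
          exact mul_le_mul_of_nonneg_left key2 hdnn
        have h5 : ε₁ * ((1 + C0) * d + d ^ 2) ≤ ε₁ * ((2 + C0) * d) := by
          have hh : (1 + C0) * d + d ^ 2 ≤ (2 + C0) * d := by linarith [hd2']
          exact mul_le_mul_of_nonneg_left hh hε₁.le
        have h6 : ε₁ * ((2 + C0) * d) = (ε / 2) * d := by
          rw [← key1]; ring
        have e1 : ε₁ * r ≤ (ε / 2) * d := le_trans h1 (h5.trans_eq h6)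
        have e2 : |T| * K ≤ d * (ε / 2) := le_trans h2 (h3.trans h4)
        calc ε₁ * r + |T| * K ≤ (ε / 2) * d + d * (ε / 2) := add_le_add e1 e2
          _ = ε * d := by ring
end HeisGraph
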